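/- Generalized unfocused forecaster is probabilistically calibrated: let G be a cumulative distribution function supported on an interval [a, b] (possibly unbounded) with continuous density g > 0 on (a, b). Let Y ∼ G, let τ be independent of Y with P(τ = +1) = P(τ = −1) = 1/2, and given τ define the forecast F(y) = (G(y) + G(y + τ))/2 for y ∈ ℝ. Then the probability integral transform Z_F = F(Y) is uniformly distributed on [0, 1]. -/

import Mathlib

open MeasureTheory ProbabilityTheory Filter Set Topology

noncomputable section

/-- Conditional probability of a set given a sub-σ-algebra, as a real-valued function. -/
def condProb {Ω : Type*} {m0 : MeasurableSpace Ω} (μ : Measure Ω) (m : MeasurableSpace Ω)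
    (A : Set Ω) : Ω → ℝ :=
  μ[A.indicator (fun _ => (1 : ℝ))|m]

/-- The conditional forecast excess distribution `F_t`. -/
def excessCdf (F : ℝ → ℝ) (t x : ℝ) : ℝ :=
  if F t < 1 then (F (x + t) - F t) / (1 - F t) else 1

/-- The excess probability integral transform `Z_F^{(t)}`. -/
def excessPIT {Ω : Type*} (F : Ω → ℝ → ℝ) (Y : Ω → ℝ) (t : ℝ) (ω : Ω) : ℝ :=
  excessCdf (F ω) t (Y ω - t)

/-- Upper endpoint `x_Y = sup {x : P(Y ≤ x) < 1}` of the outcome, in `EReal`. -/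
def upperEndpoint {Ω : Type*} {mΩ : MeasurableSpace Ω} (μ : Measure Ω) (Y : Ω → ℝ) : EReal :=
  sSup (Real.toEReal '' {x : ℝ | μ {ω | Y ω ≤ x} < 1})

/-- Upper endpoint of a (deterministic) cdf. -/
def cdfEndpoint (F : ℝ → ℝ) : EReal :=
  sSup (Real.toEReal '' {x : ℝ | F x < 1})

/-- The filter of real `t` tending to an extended-real endpoint `e` from below. -/
def toEndpoint (e : EReal) : Filter ℝ :=
  Filter.comap Real.toEReal (𝓝[<] e)

/-- `F` is a random cdf: measurable in `ω`, and almost surely a continuous cdf. -/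
def IsRandomCdf {Ω : Type*} {mΩ : MeasurableSpace Ω} (μ : Measure Ω) (F : Ω → ℝ → ℝ) : Prop :=
  (∀ x : ℝ, Measurable fun ω => F ω x) ∧
    ∀ᵐ ω ∂μ, Monotone (F ω) ∧ Continuous (F ω) ∧
      Tendsto (F ω) atTop (𝓝 1) ∧ Tendsto (F ω) atBot (𝓝 0)

/-- The endpoint assumption for a sub-σ-algebra `m`: the conditional distribution of `Y`
given `m` has (non-random) upper endpoint `x_Y`. -/
def EndpointAssumption {Ω : Type*} {m0 : MeasurableSpace Ω} (μ : Measure Ω)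
    (m : MeasurableSpace Ω) (Y : Ω → ℝ) : Prop :=
  (∀ t : ℝ, (t : EReal) < upperEndpoint μ Y →
      ∀ᵐ ω ∂μ, 0 < condProb μ m {ω' | t < Y ω'} ω) ∧
    ∀ᵐ ω ∂μ, condProb μ m {ω' | upperEndpoint μ Y < (Y ω' : EReal)} ω = 0

/-- `F` is tail `m`-calibrated for `Y`. -/
def TailCalibrated {Ω : Type*} {m0 : MeasurableSpace Ω} (μ : Measure Ω)
    (m : MeasurableSpace Ω) (F : Ω → ℝ → ℝ) (Y : Ω → ℝ) : Prop :=
  (∀ t : ℝ, (t : EReal) < upperEndpoint μ Y →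
      ∀ᵐ ω ∂μ, 0 < (μ[fun ω' => 1 - F ω' t|m]) ω) ∧
    ∀ u ∈ Icc (0 : ℝ) 1, ∀ᵐ ω ∂μ,
      Tendsto (fun t : ℝ =>
          condProb μ m {ω' | excessPIT F Y t ω' ≤ u ∧ t < Y ω'} ω /
            (μ[fun ω' => 1 - F ω' t|m]) ω)
        (toEndpoint (upperEndpoint μ Y)) (𝓝 u)

/-- `F` is probabilistically tail calibrated for `Y`. -/
def ProbTailCalibrated {Ω : Type*} {mΩ : MeasurableSpace Ω} (μ : Measure Ω)
    (F : Ω → ℝ → ℝ) (Y : Ω → ℝ) : Prop :=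
  (∀ t : ℝ, (t : EReal) < upperEndpoint μ Y → 0 < ∫ ω, (1 - F ω t) ∂μ) ∧
    ∀ u ∈ Icc (0 : ℝ) 1,
      Tendsto (fun t : ℝ =>
          (μ {ω | excessPIT F Y t ω ≤ u ∧ t < Y ω}).toReal / ∫ ω, (1 - F ω t) ∂μ)
        (toEndpoint (upperEndpoint μ Y)) (𝓝 u)

/-- `F` is marginally tail calibrated for `Y`. -/
def MargTailCalibrated {Ω : Type*} {mΩ : MeasurableSpace Ω} (μ : Measure Ω)
    (F : Ω → ℝ → ℝ) (Y : Ω → ℝ) : Prop :=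
  (∀ t : ℝ, (t : EReal) < upperEndpoint μ Y → 0 < ∫ ω, (1 - F ω t) ∂μ) ∧
    Tendsto (fun t : ℝ =>
        ⨆ x : Ici (0 : ℝ),
          |(μ {ω | t < Y ω ∧ Y ω ≤ t + (x : ℝ)}).toReal / (∫ ω, (1 - F ω t) ∂μ) -
            (∫ ω in {ω' | t < Y ω'}, excessCdf (F ω) t (x : ℝ) ∂μ) /
              (μ {ω' | t < Y ω'}).toReal|)
      (toEndpoint (upperEndpoint μ Y)) (𝓝 0)

/-- Generalized Pareto survival function `(1 + ξ x)₊^(-1/ξ)` with unit scale and shape `ξ`,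
interpreted as `exp (-x)` when `ξ = 0`. -/
def gpdSurv (ξ x : ℝ) : ℝ :=
  if ξ = 0 then Real.exp (-x) else (max (1 + ξ * x) 0) ^ (-(1 : ℝ) / ξ)

/-- the generalized unfocused forecaster is probabilistically calibrated: its
probability integral transform `Z_F = F(Y)` is uniformly distributed on `[0,1]`. -/
theorem unfocused_forecaster_probabilistically_calibrated
    {Ω : Type*} {m0 : MeasurableSpace Ω} (μ : Measure Ω) [IsProbabilityMeasure μ]
    (a b : EReal) (hab : a < b)
    (G : ℝ → ℝ) (g : ℝ → ℝ)
    (hGmono : Monotone G) (hGcont : Continuous G)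
    (hG0 : ∀ x : ℝ, (x : EReal) ≤ a → G x = 0)
    (hG1 : ∀ x : ℝ, b ≤ (x : EReal) → G x = 1)
    (hgcont : ContinuousOn g {x : ℝ | a < (x : EReal) ∧ (x : EReal) < b})
    (hgpos : ∀ x : ℝ, a < (x : EReal) → (x : EReal) < b → 0 < g x)
    (hderiv : ∀ x : ℝ, a < (x : EReal) → (x : EReal) < b → HasDerivAt G (g x) x)
    (Y τ : Ω → ℝ) (hY : Measurable Y) (hτ : Measurable τ)
    (hYdist : ∀ x : ℝ, (μ {ω | Y ω ≤ x}).toReal = G x)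
    (hτval : ∀ ω, τ ω = 1 ∨ τ ω = -1)
    (hτhalf : μ {ω | τ ω = 1} = 1 / 2)
    (hindep : IndepFun Y τ μ)
    (F : Ω → ℝ → ℝ)
    (hFdef : ∀ ω y, F ω y = (G y + G (y + τ ω)) / 2) :
    ∀ u ∈ Icc (0 : ℝ) 1, (μ {ω | F ω (Y ω) ≤ u}).toReal = u := by
  intro u hu
  -- G is a cdf: values in [0,1], limits 0 and 1
  have hGnn : ∀ x, 0 ≤ G x := fun x => (hYdist x) ▸ ENNReal.toReal_nonneg
  have hGle : ∀ x, G x ≤ 1 := by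
    intro x
    rw [← hYdist x]
    calc (μ {ω | Y ω ≤ x}).toReal ≤ (μ univ).toReal :=
          ENNReal.toReal_mono (measure_ne_top μ _) (measure_mono (subset_univ _))
      _ = 1 := by simp
  have hmap : IsProbabilityMeasure (μ.map Y) := Measure.isProbabilityMeasure_map hY.aemeasurable
  have hGeq : ∀ x, G x = cdf (μ.map Y) x := by
    intro x
    rw [cdf_eq_real, measureReal_def, Measure.map_apply hY measurableSet_Iic, ← hYdist x]
    rfl
  have hGtop : Tendsto G atTop (𝓝 1) :=
    (tendsto_cdf_atTop (μ.map Y)).congr fun x => (hGeq x).symm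
  have hGbot : Tendsto G atBot (𝓝 0) :=
    (tendsto_cdf_atBot (μ.map Y)).congr fun x => (hGeq x).symm
  set h : ℝ → ℝ := fun y => (G y + G (y + 1)) / 2 with hh
  have hmono : Monotone h := by
    intro x y hxy
    have h1 := hGmono hxy
    have h2 := hGmono (by linarith : x + 1 ≤ y + 1)
    simp only [hh]
    linarith
  have hcont : Continuous h :=
    (hGcont.add (hGcont.comp (continuous_id.add continuous_const))).div_const 2
  have htop : Tendsto h atTop (𝓝 1) := by
    have := (hGtop.add (hGtop.comp (tendsto_atTop_add_const_right atTop (1:ℝ) tendsto_id))).div_const 2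
    convert this using 2
    all_goals norm_num [hh]
  have hbot : Tendsto h atBot (𝓝 0) := by
    have := (hGbot.add (hGbot.comp (tendsto_atBot_add_const_right atBot (1:ℝ) tendsto_id))).div_const 2
    convert this using 2
    all_goals norm_num [hh]
  rcases eq_or_lt_of_le hu.2 with h1 | h1
  · -- u = 1
    subst h1
    have : {ω | F ω (Y ω) ≤ 1} = univ := by
      refine eq_univ_of_forall fun ω => ?_
      have h1 := hGle (Y ω)
      have h2 := hGle (Y ω + τ ω)
      simp only [mem_setOf_eq, hFdef]
      linarith
    rw [this]
    simp
  -- u < 1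
  rcases Set.eq_empty_or_nonempty {y | h y ≤ u} with hT | hT
  · -- empty case: u must be 0
    have hgt : ∀ y, u < h y := by
      intro y
      by_contra hle
      exact absurd (Set.eq_empty_iff_forall_notMem.mp hT y) (fun hn => hn (not_lt.mp hle))
    have hu0 : u = 0 := by
      refine le_antisymm ?_ hu.1
      by_contra hpos
      push_neg at hpos
      obtain ⟨y, hy⟩ := (hbot.eventually_lt_const hpos).exists
      exact absurd (hgt y) (not_lt.mpr hy.le)
    subst hu0
    have : {ω | F ω (Y ω) ≤ 0} = ∅ := by
      refine eq_empty_iff_forall_notMem.mpr fun ω hω => ?_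
      simp only [mem_setOf_eq, hFdef] at hω
      rcases hτval ω with ht | ht <;> rw [ht] at hω
      · exact absurd hω (not_le.mpr (hgt (Y ω)))
      · have := hgt (Y ω - 1)
        simp only [hh] at this
        rw [sub_add_cancel] at this
        have heq : Y ω + -1 = Y ω - 1 := by ring
        rw [heq] at hω
        linarith
    rw [this]
    simp
  -- nonempty case
  have hbdd : BddAbove {y | h y ≤ u} := by
    obtain ⟨M, hM⟩ := (htop.eventually_const_lt h1).exists_forall_of_atTop
    refine ⟨M, fun y hy => ?_⟩
    by_contra hc
    push_neg at hc
    exact absurd (hM y hc.le) (not_lt.mpr hy)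
  have hTclosed : IsClosed {y | h y ≤ u} := isClosed_le hcont continuous_const
  set c := sSup {y | h y ≤ u} with hc
  have hcmem : c ∈ {y | h y ≤ u} := hTclosed.csSup_mem hT hbdd
  have hTeq : {y | h y ≤ u} = Iic c := by
    refine subset_antisymm (fun y hy => le_csSup hbdd hy) (fun y hy => ?_)
    exact le_trans (hmono hy) hcmem
  have hcu : h c = u := by
    refine le_antisymm hcmem ?_
    have hseq : Tendsto (fun n : ℕ => c + 1 / (n + 1)) atTop (𝓝 c) := by
      have h0 : Tendsto (fun n : ℕ => 1 / ((n : ℝ) + 1)) atTop (𝓝 0) :=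
        tendsto_one_div_add_atTop_nhds_zero_nat
      simpa using ((tendsto_const_nhds : Tendsto (fun _ : ℕ => c) atTop (𝓝 c)).add h0)
    refine ge_of_tendsto ((hcont.tendsto c).comp hseq) (Eventually.of_forall fun n => ?_)
    show u ≤ h (c + 1 / ((n : ℝ) + 1))
    by_contra hle
    push_neg at hle
    have hmem : c + 1 / ((n : ℝ) + 1) ≤ c := le_csSup hbdd hle.le
    have : (0:ℝ) < 1 / ((n : ℝ) + 1) := by positivity
    linarith
  -- set decomposition
  have hkey : ∀ y : ℝ, h y ≤ u ↔ y ≤ c := by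
    intro y
    constructor
    · intro hy; exact le_csSup hbdd hy
    · intro hy; exact le_trans (hmono hy) hcmem
  have hA : {ω | F ω (Y ω) ≤ u} =
      (Y ⁻¹' Iic c ∩ τ ⁻¹' {1}) ∪ (Y ⁻¹' Iic (c + 1) ∩ τ ⁻¹' {(-1 : ℝ)}) := by
    ext ω
    simp only [mem_setOf_eq, mem_union, mem_inter_iff, mem_preimage, mem_Iic,
      mem_singleton_iff, hFdef]
    rcases hτval ω with ht | ht <;> rw [ht]
    · have : (G (Y ω) + G (Y ω + 1)) / 2 = h (Y ω) := rfl
      rw [this, hkey]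
      constructor
      · intro hy; exact Or.inl ⟨hy, rfl⟩
      · rintro (⟨hy, -⟩ | ⟨-, habs⟩)
        · exact hy
        · norm_num at habs
    · have heq : (G (Y ω) + G (Y ω + -1)) / 2 = h (Y ω - 1) := by
        simp only [hh]
        rw [sub_add_cancel]
        ring_nf
      rw [heq, hkey]
      constructor
      · intro hy; exact Or.inr ⟨by linarith, rfl⟩
      · rintro (⟨-, habs⟩ | ⟨hy, -⟩)
        · norm_num at habs
        · linarith
  have hτ1 : μ (τ ⁻¹' {(1 : ℝ)}) = 1 / 2 := by
    have : τ ⁻¹' {(1 : ℝ)} = {ω | τ ω = 1} := by ext ω; simp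
    rw [this, hτhalf]
  have hτm1 : μ (τ ⁻¹' {(-1 : ℝ)}) = 1 / 2 := by
    have hcompl : τ ⁻¹' {(-1 : ℝ)} = (τ ⁻¹' {(1 : ℝ)})ᶜ := by
      ext ω
      rcases hτval ω with ht | ht <;> simp [ht] <;> norm_num
    rw [hcompl, measure_compl (hτ (measurableSet_singleton 1)) (measure_ne_top _ _),
      measure_univ, hτ1]
    refine ENNReal.sub_eq_of_eq_add (by norm_num) ?_
    rw [ENNReal.div_add_div_same]
    norm_num
    rw [ENNReal.div_self] <;> norm_num
  have hdisj : Disjoint (Y ⁻¹' Iic c ∩ τ ⁻¹' {(1:ℝ)}) (Y ⁻¹' Iic (c + 1) ∩ τ ⁻¹' {(-1:ℝ)}) := by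
    refine Set.disjoint_left.mpr fun ω h1 h2 => ?_
    have e1 : τ ω = 1 := h1.2
    have e2 : τ ω = -1 := h2.2
    rw [e1] at e2
    norm_num at e2
  have hm2 : MeasurableSet (Y ⁻¹' Iic (c + 1) ∩ τ ⁻¹' {(-1:ℝ)}) :=
    (hY measurableSet_Iic).inter (hτ (measurableSet_singleton _))
  rw [hA, measure_union hdisj hm2,
    hindep.measure_inter_preimage_eq_mul _ _ measurableSet_Iic (measurableSet_singleton _),
    hindep.measure_inter_preimage_eq_mul _ _ measurableSet_Iic (measurableSet_singleton _),
    hτ1, hτm1]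
  have hY1 : (μ (Y ⁻¹' Iic c)).toReal = G c := by rw [← hYdist c]; rfl
  have hY2 : (μ (Y ⁻¹' Iic (c + 1))).toReal = G (c + 1) := by rw [← hYdist (c + 1)]; rfl
  rw [ENNReal.toReal_add (ENNReal.mul_ne_top (measure_ne_top μ _) (by norm_num))
    (ENNReal.mul_ne_top (measure_ne_top μ _) (by norm_num)), ENNReal.toReal_mul,
    ENNReal.toReal_mul, hY1, hY2]
  have : ((1 : ENNReal) / 2).toReal = 1 / 2 := by norm_num
  rw [this]
  have := hcu
  simp only [hh] at this
  linarith
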